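/- Let N be an integer with N > 2 and N ≠ 4, and let β ∈ ℝ satisfy −1/(4(N−1)) ≤ β ≤ 0. Then there exists a constant c > 0, depending only on N and β, such that for every r > 0, 0 ≤ ∫_0^r G(τ, r) dτ ≤ c·r⁴, where G is defined as in the context (extended by G(0,r) = 0). -/

import Mathlib

open intervalIntegral

/-- `G₁(τ,s) = ∫_τ^s τ^{N−1}/u^{N−1} du`. -/
noncomputable def G₁ (N : ℕ) (τ s : ℝ) : ℝ :=
  ∫ u in τ..s, (τ : ℝ) ^ (N - 1) / u ^ (N - 1)

/-- `H₁(τ,s) = τ (s^N − τ^N)/N`. -/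
noncomputable def H₁ (N : ℕ) (τ s : ℝ) : ℝ := τ * (s ^ N - τ ^ N) / N

/-- `G₂(τ,s) = ∫_τ^s u^{N−1} G₁(τ,u) du`. -/
noncomputable def G₂ (N : ℕ) (τ s : ℝ) : ℝ :=
  ∫ u in τ..s, u ^ (N - 1) * G₁ N τ u

/-- `G(τ,r) = −β ∫_τ^r H₁(τ,s) s^{1−N} ds
      + ((4(N−1)β+1)/4) ∫_τ^r G₂(τ,s) s^{1−N} ds`. -/
noncomputable def G (N : ℕ) (β τ r : ℝ) : ℝ :=
  -β * (∫ s in τ..r, H₁ N τ s * s ^ ((1 : ℤ) - N))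
    + ((4 * ((N : ℝ) - 1) * β + 1) / 4)
      * ∫ s in τ..r, G₂ N τ s * s ^ ((1 : ℤ) - N)

/-- The kernel `G` extended by `G(0,r) = 0`. -/
noncomputable def Gext (N : ℕ) (β τ r : ℝ) : ℝ :=
  if τ = 0 then 0 else G N β τ r

/-- for `N > 2`, `N ≠ 4` and `−1/(4(N−1)) ≤ β ≤ 0`, there is
`c = c(N,β) > 0` with `0 ≤ ∫_0^r G(τ,r) dτ ≤ c r⁴` for every `r > 0`. -/

lemma pos_of_mem_uIcc {a b v : ℝ} (ha : 0 < a) (hb : 0 < b) (hv : v ∈ Set.uIcc a b) :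
    0 < v := by
  rcases Set.mem_uIcc.mp hv with ⟨h1, _⟩ | ⟨h1, _⟩ <;> linarith

lemma zero_not_mem_uIcc {a b : ℝ} (ha : 0 < a) (hb : 0 < b) : (0:ℝ) ∉ Set.uIcc a b :=
  fun h => absurd (pos_of_mem_uIcc ha hb h) (lt_irrefl 0)

lemma G1_eq (N : ℕ) (hN : 2 < N) {τ u : ℝ} (hτ : 0 < τ) (hu : 0 < u) :
    G₁ N τ u = τ ^ (N - 1) * ((u ^ ((2:ℤ) - N) - τ ^ ((2:ℤ) - N)) / (2 - (N:ℝ))) := by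
  unfold G₁
  rw [integral_congr (g := fun v : ℝ => τ ^ (N - 1) * v ^ ((1:ℤ) - N)) ?_]
  · rw [integral_const_mul, integral_zpow (Or.inr ⟨by omega, zero_not_mem_uIcc hτ hu⟩)]
    have h1 : (1:ℤ) - N + 1 = (2:ℤ) - N := by ring
    rw [h1]
    push_cast
    ring
  · intro v hv
    have hv0 : 0 < v := pos_of_mem_uIcc hτ hu hv
    show τ ^ (N - 1) / v ^ (N - 1) = τ ^ (N - 1) * v ^ ((1:ℤ) - N)
    rw [div_eq_mul_inv]
    congr 1
    rw [← zpow_natCast v (N - 1), ← zpow_neg]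
    congr 1
    push_cast [Nat.cast_sub (by omega : 1 ≤ N)]
    ring

lemma pow_mul_zpow_core {v : ℝ} (hv : v ≠ 0) (N : ℕ) (hN : 2 < N) :
    v ^ (N - 1) * v ^ ((2:ℤ) - N) = v := by
  rw [← zpow_natCast v (N - 1), ← zpow_add₀ hv]
  have : ((N - 1 : ℕ) : ℤ) + ((2:ℤ) - N) = 1 := by
    push_cast [Nat.cast_sub (by omega : 1 ≤ N)]; ring
  rw [this, zpow_one]

lemma G2_eq (N : ℕ) (hN : 2 < N) {τ s : ℝ} (hτ : 0 < τ) (hs : 0 < s) :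
    G₂ N τ s = τ ^ (N - 1) / (2 - (N:ℝ)) *
      ((s ^ 2 - τ ^ 2) / 2 - τ ^ ((2:ℤ) - N) * ((s ^ N - τ ^ N) / (N:ℝ))) := by
  have hN2 : (2:ℝ) - N ≠ 0 := by
    have : (2:ℝ) < N := by exact_mod_cast hN
    linarith
  have hN0 : (N:ℝ) ≠ 0 := by positivity
  unfold G₂
  rw [integral_congr (g := fun v : ℝ =>
      (τ ^ (N - 1) / (2 - (N:ℝ))) * v +
      (-(τ ^ (N - 1) / (2 - (N:ℝ)) * τ ^ ((2:ℤ) - N))) * v ^ (N - 1)) ?_]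
  · rw [integral_add (Continuous.intervalIntegrable (by fun_prop) _ _)
        (Continuous.intervalIntegrable (by fun_prop) _ _)]
    rw [integral_const_mul, integral_const_mul, integral_id, integral_pow]
    have hsub : N - 1 + 1 = N := by omega
    rw [hsub]
    field_simp
    push_cast [Nat.cast_sub (by omega : 1 ≤ N)]
    ring
  · intro v hv
    have hv0 : 0 < v := pos_of_mem_uIcc hτ hs hv
    show v ^ (N - 1) * G₁ N τ v = _
    rw [G1_eq N hN hτ hv0]
    have key := pow_mul_zpow_core hv0.ne' N hN
    linear_combination (τ ^ (N-1) / (2 - (N:ℝ))) * key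

lemma powN_mul_zpow {v : ℝ} (hv : v ≠ 0) (N : ℕ) :
    v ^ N * v ^ ((1:ℤ) - N) = v := by
  rw [← zpow_natCast v N, ← zpow_add₀ hv]
  have : ((N:ℕ) : ℤ) + ((1:ℤ) - N) = 1 := by push_cast; ring
  rw [this, zpow_one]

lemma intH (N : ℕ) (hN : 2 < N) {τ r : ℝ} (hτ : 0 < τ) (hr : 0 < r) :
    (∫ s in τ..r, H₁ N τ s * s ^ ((1:ℤ) - N)) =
      (τ / (N:ℝ)) * ((r ^ 2 - τ ^ 2) / 2)
      - (τ * τ ^ N / (N:ℝ)) * ((r ^ ((2:ℤ) - N) - τ ^ ((2:ℤ) - N)) / (2 - (N:ℝ))) := by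
  have hN2 : (2:ℝ) - N ≠ 0 := by
    have : (2:ℝ) < N := by exact_mod_cast hN
    linarith
  have hN0 : (N:ℝ) ≠ 0 := by positivity
  have h0 := zero_not_mem_uIcc hτ hr
  rw [integral_congr (g := fun v : ℝ =>
      (τ / (N:ℝ)) * v + (-(τ * τ ^ N / (N:ℝ))) * v ^ ((1:ℤ) - N)) ?_]
  · rw [integral_add (Continuous.intervalIntegrable (by fun_prop) _ _)
        ((intervalIntegrable_zpow (Or.inr h0)).const_mul _)]
    rw [integral_const_mul, integral_const_mul, integral_id,
      integral_zpow (Or.inr ⟨by omega, h0⟩)]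
    have h1 : (1:ℤ) - N + 1 = (2:ℤ) - N := by ring
    rw [h1]
    push_cast
    ring
  · intro v hv
    have hv0 : 0 < v := pos_of_mem_uIcc hτ hr hv
    show H₁ N τ v * v ^ ((1:ℤ) - N) = _
    unfold H₁
    have key := powN_mul_zpow hv0.ne' N
    linear_combination (τ / (N:ℝ)) * key

lemma pow2_mul_zpow {v : ℝ} (hv : v ≠ 0) (N : ℕ) :
    v ^ 2 * v ^ ((1:ℤ) - N) = v ^ ((3:ℤ) - N) := by
  rw [← zpow_natCast v 2, ← zpow_add₀ hv]
  norm_num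
  congr 1
  ring

lemma intG2 (N : ℕ) (hN : 2 < N) (hN4 : N ≠ 4) {τ r : ℝ} (hτ : 0 < τ) (hr : 0 < r) :
    (∫ s in τ..r, G₂ N τ s * s ^ ((1:ℤ) - N)) =
      (τ ^ (N - 1) / (2 - (N:ℝ)) / 2) * ((r ^ ((4:ℤ) - N) - τ ^ ((4:ℤ) - N)) / (4 - (N:ℝ)))
      + (-(τ ^ (N - 1) * τ ^ 2) / (2 - (N:ℝ)) / 2
          + τ ^ (N - 1) * τ ^ ((2:ℤ) - N) * τ ^ N / (2 - (N:ℝ)) / (N:ℝ))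
        * ((r ^ ((2:ℤ) - N) - τ ^ ((2:ℤ) - N)) / (2 - (N:ℝ)))
      + (-(τ ^ (N - 1) * τ ^ ((2:ℤ) - N)) / (2 - (N:ℝ)) / (N:ℝ)) * ((r ^ 2 - τ ^ 2) / 2) := by
  have hN2 : (2:ℝ) - N ≠ 0 := by
    have : (2:ℝ) < N := by exact_mod_cast hN
    linarith
  have hN0 : (N:ℝ) ≠ 0 := by positivity
  have h0 := zero_not_mem_uIcc hτ hr
  rw [integral_congr (g := fun v : ℝ =>
      (τ ^ (N - 1) / (2 - (N:ℝ)) / 2) * v ^ ((3:ℤ) - N)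
      + (-(τ ^ (N - 1) * τ ^ 2) / (2 - (N:ℝ)) / 2
          + τ ^ (N - 1) * τ ^ ((2:ℤ) - N) * τ ^ N / (2 - (N:ℝ)) / (N:ℝ)) * v ^ ((1:ℤ) - N)
      + (-(τ ^ (N - 1) * τ ^ ((2:ℤ) - N)) / (2 - (N:ℝ)) / (N:ℝ)) * v) ?_]
  · rw [integral_add (((intervalIntegrable_zpow (Or.inr h0)).const_mul _).add
        ((intervalIntegrable_zpow (Or.inr h0)).const_mul _))
        (Continuous.intervalIntegrable (by fun_prop) _ _),
      integral_add ((intervalIntegrable_zpow (Or.inr h0)).const_mul _)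
        ((intervalIntegrable_zpow (Or.inr h0)).const_mul _)]
    rw [integral_const_mul, integral_const_mul, integral_const_mul, integral_id,
      integral_zpow (Or.inr ⟨by omega, h0⟩), integral_zpow (Or.inr ⟨by omega, h0⟩)]
    have h1 : (1:ℤ) - N + 1 = (2:ℤ) - N := by ring
    have h3 : (3:ℤ) - N + 1 = (4:ℤ) - N := by ring
    rw [h1, h3]
    push_cast
    ring
  · intro v hv
    have hv0 : 0 < v := pos_of_mem_uIcc hτ hr hv
    show G₂ N τ v * v ^ ((1:ℤ) - N) = _
    rw [G2_eq N hN hτ hv0]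
    have e1 := pow2_mul_zpow hv0.ne' N
    have e2 := powN_mul_zpow hv0.ne' N
    linear_combination (τ ^ (N - 1) / (2 - (N:ℝ)) / 2) * e1
      + (-(τ ^ (N - 1) * τ ^ ((2:ℤ) - N)) / (2 - (N:ℝ)) / (N:ℝ)) * e2

lemma zpow2_sub {v : ℝ} (hv : v ≠ 0) (N : ℕ) :
    v ^ ((2:ℤ) - N) = v ^ 2 / v ^ N := by
  rw [zpow_sub₀ hv, zpow_natCast]
  norm_cast

lemma zpow4_sub {v : ℝ} (hv : v ≠ 0) (N : ℕ) :
    v ^ ((4:ℤ) - N) = v ^ 4 / v ^ N := by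
  rw [zpow_sub₀ hv, zpow_natCast]
  norm_cast

lemma G_eq (N : ℕ) (hN : 2 < N) (hN4 : N ≠ 4) (β : ℝ) {τ r : ℝ} (hτ : 0 < τ) (hr : 0 < r) :
    G N β τ r =
      (-β / (N:ℝ) / 2 - ((4 * ((N:ℝ) - 1) * β + 1) / 4) / (N:ℝ) / (2 - (N:ℝ)) / 2) * r ^ 2 * τ
      + (-β / (2 - (N:ℝ)) / 2
          - ((4 * ((N:ℝ) - 1) * β + 1) / 4) / (2 - (N:ℝ)) / (4 - (N:ℝ)) / 2) * τ ^ 3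
      + (β / (N:ℝ) / (2 - (N:ℝ))
          + ((4 * ((N:ℝ) - 1) * β + 1) / 4) / (N:ℝ) / (2 - (N:ℝ)) / 2)
          * r ^ ((2:ℤ) - N) * τ ^ (N + 1)
      + (((4 * ((N:ℝ) - 1) * β + 1) / 4) / (2 - (N:ℝ)) / (4 - (N:ℝ)) / 2)
          * r ^ ((2:ℤ) - N) * r ^ 2 * τ ^ (N - 1) := by
  have hN2 : (2:ℝ) - N ≠ 0 := by
    have : (2:ℝ) < N := by exact_mod_cast hN
    linarith
  have hN4' : (4:ℝ) - N ≠ 0 := by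
    intro h
    apply hN4
    have : (N:ℝ) = 4 := by linarith
    exact_mod_cast this
  have hN0 : (N:ℝ) ≠ 0 := by positivity
  unfold G
  rw [intH N hN hτ hr, intG2 N hN hN4 hτ hr]
  rw [zpow2_sub hτ.ne' N, zpow4_sub hτ.ne' N, zpow2_sub hr.ne' N, zpow4_sub hr.ne' N]
  have hP : τ ^ (N - 1) = τ ^ N / τ := by
    rw [eq_div_iff hτ.ne', ← pow_succ, Nat.sub_add_cancel (by omega : 1 ≤ N)]
  have hP1 : τ ^ (N + 1) = τ ^ N * τ := pow_succ τ N
  rw [hP, hP1]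
  have hτN : τ ^ N ≠ 0 := pow_ne_zero _ hτ.ne'
  have hrN : r ^ N ≠ 0 := pow_ne_zero _ hr.ne'
  field_simp
  ring

theorem stmt_12 (N : ℕ) (hN : 2 < N) (hN4 : N ≠ 4) (β : ℝ)
    (hβ₁ : -(1 / (4 * ((N : ℝ) - 1))) ≤ β) (hβ₂ : β ≤ 0) :
    ∃ c : ℝ, 0 < c ∧ ∀ r : ℝ, 0 < r →
      0 ≤ (∫ τ in (0 : ℝ)..r, Gext N β τ r) ∧
        (∫ τ in (0 : ℝ)..r, Gext N β τ r) ≤ c * r ^ 4 := by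
  have hN2 : (2:ℝ) - N ≠ 0 := by
    have : (2:ℝ) < N := by exact_mod_cast hN
    linarith
  have hN4' : (4:ℝ) - N ≠ 0 := by
    intro h
    apply hN4
    have : (N:ℝ) = 4 := by linarith
    exact_mod_cast this
  have hN0 : (N:ℝ) ≠ 0 := by positivity
  have hNpos : (0:ℝ) < N := by positivity
  have hc : (0:ℝ) < (1 - 4 * β) / (32 * (N:ℝ) * ((N:ℝ) + 2)) :=
    div_pos (by linarith) (by positivity)
  refine ⟨(1 - 4 * β) / (32 * (N:ℝ) * ((N:ℝ) + 2)), hc, ?_⟩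
  intro r hr
  have key : (∫ τ in (0:ℝ)..r, Gext N β τ r)
      = (1 - 4 * β) / (32 * (N:ℝ) * ((N:ℝ) + 2)) * r ^ 4 := by
    rw [integral_congr (g := fun τ : ℝ =>
      ((-β / (N:ℝ) / 2 - ((4 * ((N:ℝ) - 1) * β + 1) / 4) / (N:ℝ) / (2 - (N:ℝ)) / 2) * r ^ 2) * τ
      + (-β / (2 - (N:ℝ)) / 2
          - ((4 * ((N:ℝ) - 1) * β + 1) / 4) / (2 - (N:ℝ)) / (4 - (N:ℝ)) / 2) * τ ^ 3
      + ((β / (N:ℝ) / (2 - (N:ℝ))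
          + ((4 * ((N:ℝ) - 1) * β + 1) / 4) / (N:ℝ) / (2 - (N:ℝ)) / 2)
          * r ^ ((2:ℤ) - N)) * τ ^ (N + 1)
      + ((((4 * ((N:ℝ) - 1) * β + 1) / 4) / (2 - (N:ℝ)) / (4 - (N:ℝ)) / 2)
          * r ^ ((2:ℤ) - N) * r ^ 2) * τ ^ (N - 1)) ?_]
    · rw [integral_add ((Continuous.intervalIntegrable (by fun_prop) _ _).add
            (Continuous.intervalIntegrable (by fun_prop) _ _))
          (Continuous.intervalIntegrable (by fun_prop) _ _),
        integral_add (Continuous.intervalIntegrable (by fun_prop) _ _)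
          (Continuous.intervalIntegrable (by fun_prop) _ _),
        integral_add (Continuous.intervalIntegrable (by fun_prop) _ _)
          (Continuous.intervalIntegrable (by fun_prop) _ _)]
      rw [integral_const_mul, integral_const_mul, integral_const_mul, integral_const_mul,
        integral_id, integral_pow, integral_pow, integral_pow]
      have e1 : N + 1 + 1 = N + 2 := by omega
      have e2 : N - 1 + 1 = N := by omega
      rw [e1, e2, zpow2_sub hr.ne' N]
      have hrN : r ^ N ≠ 0 := pow_ne_zero _ hr.ne'
      have hN2' : ((N:ℝ) + 2) ≠ 0 := by positivity
      have hpow : r ^ (N + 2) = r ^ N * r ^ 2 := pow_add r N 2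
      rw [hpow]
      push_cast
      field_simp
      push_cast [Nat.cast_sub (by omega : 1 ≤ N), zero_pow (by omega : N ≠ 0)]
      ring
    · intro τ hτmem
      rw [Set.uIcc_of_le hr.le] at hτmem
      obtain ⟨hτ0, hτr⟩ := hτmem
      rcases eq_or_lt_of_le hτ0 with h | h
      · simp only [← h, Gext, if_pos rfl]
        have h1 : N + 1 ≠ 0 := by omega
        have h2 : N - 1 ≠ 0 := by omega
        simp [zero_pow h1, zero_pow h2]
      · show Gext N β τ r = _
        unfold Gext
        rw [if_neg h.ne', G_eq N hN hN4 β h hr]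
  rw [key]
  exact ⟨le_of_lt (mul_pos hc (by positivity)), le_refl _⟩
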